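/- Let A₀, A₁ be n×n real matrices, λ ∈ [0,1], and define 𝓛(X) = λA₁XA₁ᵀ + (1-λ)A₀XA₀ᵀ for n×n real matrices X. Suppose there exists a symmetric positive definite matrix Ξ such that Ξ - 𝓛(Ξ) is positive definite. Then for every positive semidefinite n×n matrix X, the iterates 𝓛^k(X) converge to the zero matrix as k → ∞. -/

import Mathlib

open Matrix Filter

section stmt15Helpers
variable {n : ℕ}

private lemma stmt15_quad_cont (M : Matrix (Fin n) (Fin n) ℝ) :
    Continuous fun x : Fin n → ℝ => x ⬝ᵥ M *ᵥ x := by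
  simp only [dotProduct, mulVec]
  fun_prop

private lemma stmt15_quad_smul (M : Matrix (Fin n) (Fin n) ℝ) (a : ℝ) (x : Fin n → ℝ) :
    (a • x) ⬝ᵥ M *ᵥ (a • x) = a ^ 2 * (x ⬝ᵥ M *ᵥ x) := by
  rw [mulVec_smul, dotProduct_smul, smul_dotProduct]
  rw [smul_eq_mul, smul_eq_mul]; ring

private lemma stmt15_quad_compare (M Xi : Matrix (Fin n) (Fin n) ℝ)
    (hM : M.PosSemidef) (hXi : Xi.PosDef) :
    ∃ c : ℝ, 0 < c ∧ ∀ x : Fin n → ℝ, x ⬝ᵥ M *ᵥ x ≤ c * (x ⬝ᵥ Xi *ᵥ x) := by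
  rcases Nat.eq_zero_or_pos n with hn | hn
  · refine ⟨1, one_pos, fun x => ?_⟩
    subst hn
    have hx : x = 0 := Subsingleton.elim _ _
    simp [hx]
  · set S := Metric.sphere (0 : Fin n → ℝ) 1 with hS
    have hScomp : IsCompact S := isCompact_sphere _ _
    have hSne : S.Nonempty := by
      have : Nontrivial (Fin n → ℝ) := by
        have : Nonempty (Fin n) := ⟨⟨0, hn⟩⟩
        infer_instance
      rw [hS, NormedSpace.sphere_nonempty]
      exact zero_le_one
    have hf : Continuous fun x : Fin n → ℝ => x ⬝ᵥ M *ᵥ x := stmt15_quad_cont M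
    have hg : Continuous fun x : Fin n → ℝ => x ⬝ᵥ Xi *ᵥ x := stmt15_quad_cont Xi
    obtain ⟨u, huS, hu⟩ := hScomp.exists_isMaxOn hSne hf.continuousOn
    obtain ⟨v, hvS, hv⟩ := hScomp.exists_isMinOn hSne hg.continuousOn
    have hgv : 0 < v ⬝ᵥ Xi *ᵥ v := by
      apply (show ∀ x : Fin n → ℝ, x ≠ 0 → 0 < x ⬝ᵥ Xi *ᵥ x from fun x hx => by simpa using hXi.dotProduct_mulVec_pos hx)
      intro h
      rw [h] at hvS
      simp [hS] at hvS
    set fmax := u ⬝ᵥ M *ᵥ u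
    set gmin := v ⬝ᵥ Xi *ᵥ v
    have hfmax : 0 ≤ fmax := by simpa using hM.dotProduct_mulVec_nonneg u
    refine ⟨max (fmax / gmin) 1, lt_of_lt_of_le one_pos (le_max_right _ _), fun x => ?_⟩
    by_cases hx : x = 0
    · simp [hx]
    · have hnx : 0 < ‖x‖ := norm_pos_iff.mpr hx
      set y : Fin n → ℝ := ‖x‖⁻¹ • x with hy
      have hyS : y ∈ S := by
        simp [hS, hy, norm_smul, abs_of_pos (inv_pos.mpr hnx), inv_mul_cancel₀ hnx.ne']
      have hfy : y ⬝ᵥ M *ᵥ y ≤ fmax := hu hyS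
      have hgy : gmin ≤ y ⬝ᵥ Xi *ᵥ y := hv hyS
      have key : y ⬝ᵥ M *ᵥ y ≤ max (fmax / gmin) 1 * (y ⬝ᵥ Xi *ᵥ y) := by
        calc y ⬝ᵥ M *ᵥ y ≤ fmax := hfy
        _ = (fmax / gmin) * gmin := by field_simp
        _ ≤ max (fmax / gmin) 1 * gmin :=
            mul_le_mul_of_nonneg_right (le_max_left _ _) hgv.le
        _ ≤ max (fmax / gmin) 1 * (y ⬝ᵥ Xi *ᵥ y) :=
            mul_le_mul_of_nonneg_left hgy (lt_of_lt_of_le one_pos (le_max_right _ _)).le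
      have hxy : x = ‖x‖ • y := by
        rw [hy, smul_smul, mul_inv_cancel₀ hnx.ne', one_smul]
      calc x ⬝ᵥ M *ᵥ x = ‖x‖ ^ 2 * (y ⬝ᵥ M *ᵥ y) := by rw [hxy, stmt15_quad_smul]; rw [← hxy]
      _ ≤ ‖x‖ ^ 2 * (max (fmax / gmin) 1 * (y ⬝ᵥ Xi *ᵥ y)) := by
          exact mul_le_mul_of_nonneg_left key (sq_nonneg _)
      _ = max (fmax / gmin) 1 * (x ⬝ᵥ Xi *ᵥ x) := by
          rw [hxy, stmt15_quad_smul]; rw [← hxy]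
          have h2 : ‖x‖ ^ 2 * ‖x‖⁻¹ ^ 2 = 1 := by
            rw [← mul_pow, mul_inv_cancel₀ hnx.ne', one_pow]
          calc ‖x‖ ^ 2 * (max (fmax / gmin) 1 * (‖x‖⁻¹ ^ 2 * (x ⬝ᵥ Xi *ᵥ x)))
              = (‖x‖ ^ 2 * ‖x‖⁻¹ ^ 2) * (max (fmax / gmin) 1 * (x ⬝ᵥ Xi *ᵥ x)) := by ring
            _ = max (fmax / gmin) 1 * (x ⬝ᵥ Xi *ᵥ x) := by rw [h2, one_mul]

private lemma stmt15_psd_smul {M : Matrix (Fin n) (Fin n) ℝ} (hM : M.PosSemidef) {c : ℝ}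
    (hc : 0 ≤ c) : (c • M).PosSemidef := by
  refine .of_dotProduct_mulVec_nonneg ?_ (fun x => ?_)
  · unfold Matrix.IsHermitian
    rw [conjTranspose_smul, hM.1]
    simp
  · rw [smul_mulVec, dotProduct_smul, smul_eq_mul]
    exact mul_nonneg hc (by simpa using hM.dotProduct_mulVec_nonneg x)

private lemma stmt15_quad_diff (M : Matrix (Fin n) (Fin n) ℝ) (i j : Fin n) :
    ((Pi.single i 1 - Pi.single j 1 : Fin n → ℝ)) ⬝ᵥ M *ᵥ
      ((Pi.single i 1 - Pi.single j 1 : Fin n → ℝ)) = M i i - M i j - M j i + M j j := by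
  rw [mulVec_sub, dotProduct_sub, sub_dotProduct, sub_dotProduct]
  simp [mulVec_single, dotProduct_single, single_dotProduct, Pi.single_apply]
  ring

private lemma stmt15_quad_sum (M : Matrix (Fin n) (Fin n) ℝ) (i j : Fin n) :
    ((Pi.single i 1 + Pi.single j 1 : Fin n → ℝ)) ⬝ᵥ M *ᵥ
      ((Pi.single i 1 + Pi.single j 1 : Fin n → ℝ)) = M i i + M i j + M j i + M j j := by
  rw [mulVec_add, dotProduct_add, add_dotProduct, add_dotProduct]
  simp [mulVec_single, dotProduct_single, single_dotProduct, Pi.single_apply]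
  ring

private lemma stmt15_quad_basis (M : Matrix (Fin n) (Fin n) ℝ) (i : Fin n) :
    (Pi.single i 1 : Fin n → ℝ) ⬝ᵥ M *ᵥ (Pi.single i 1 : Fin n → ℝ) = M i i := by
  simp [mulVec_single, single_dotProduct]

end stmt15Helpers

/-- Mean-square stability: under a Lyapunov certificate for the second-moment operator
`𝓛(X) = λ A₁ X A₁ᵀ + (1-λ) A₀ X A₀ᵀ`, the iterates `𝓛^k(X)` of any positive
semidefinite matrix converge to zero. -/
theorem stmt15 (n : ℕ) (A₀ A₁ : Matrix (Fin n) (Fin n) ℝ)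
    (lam : ℝ) (hlam0 : 0 ≤ lam) (hlam1 : lam ≤ 1)
    (L : Matrix (Fin n) (Fin n) ℝ → Matrix (Fin n) (Fin n) ℝ)
    (hL : ∀ X, L X = lam • (A₁ * X * A₁ᵀ) + (1 - lam) • (A₀ * X * A₀ᵀ))
    (Ξ : Matrix (Fin n) (Fin n) ℝ) (hΞ : Ξ.PosDef) (hlyap : (Ξ - L Ξ).PosDef) :
    ∀ X : Matrix (Fin n) (Fin n) ℝ, X.PosSemidef →
      Tendsto (fun k => L^[k] X) atTop (nhds 0) := by
  intro X hX
  -- L preserves positive semidefiniteness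
  have hLpsd : ∀ M : Matrix (Fin n) (Fin n) ℝ, M.PosSemidef → (L M).PosSemidef := by
    intro M hM
    rw [hL]
    have h1 : (A₁ * M * A₁ᵀ).PosSemidef := by
      have := hM.mul_mul_conjTranspose_same A₁
      rwa [conjTranspose_eq_transpose_of_trivial] at this
    have h0 : (A₀ * M * A₀ᵀ).PosSemidef := by
      have := hM.mul_mul_conjTranspose_same A₀
      rwa [conjTranspose_eq_transpose_of_trivial] at this
    exact (stmt15_psd_smul h1 hlam0).add (stmt15_psd_smul h0 (by linarith))
  -- L is linear
  have hLsub : ∀ M N : Matrix (Fin n) (Fin n) ℝ, L (M - N) = L M - L N := by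
    intro M N
    simp only [hL, Matrix.mul_sub, Matrix.sub_mul, smul_sub]
    abel
  have hLsmul : ∀ (a : ℝ) (M : Matrix (Fin n) (Fin n) ℝ), L (a • M) = a • L M := by
    intro a M
    simp only [hL, Matrix.mul_smul, Matrix.smul_mul, smul_add, smul_smul, mul_comm]
  -- monotonicity
  have hLmono : ∀ M N : Matrix (Fin n) (Fin n) ℝ, (N - M).PosSemidef →
      (L N - L M).PosSemidef := by
    intro M N h
    rw [← hLsub]
    exact hLpsd _ h
  -- contraction factor ρ ∈ [0,1): L Ξ ⪯ ρ • Ξ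
  obtain ⟨c₀, hc₀, hc₀le⟩ := stmt15_quad_compare Ξ (Ξ - L Ξ) hΞ.posSemidef hlyap
  set δ : ℝ := min c₀⁻¹ 1 with hδ
  have hδpos : 0 < δ := lt_min (inv_pos.mpr hc₀) one_pos
  have hδ1 : δ ≤ 1 := min_le_right _ _
  set ρ : ℝ := 1 - δ with hρ
  have hρ0 : 0 ≤ ρ := by simp [hρ]; linarith
  have hρ1 : ρ < 1 := by simp [hρ]; linarith
  have hcontr : (ρ • Ξ - L Ξ).PosSemidef := by
    refine .of_dotProduct_mulVec_nonneg ?_ (fun x => ?_)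
    · have hΞh : Ξᴴ = Ξ := hΞ.1
      have hLΞh : (L Ξ)ᴴ = L Ξ := by
        have h1 : (Ξ - L Ξ)ᴴ = Ξ - L Ξ := hlyap.1
        rw [conjTranspose_sub, hΞh] at h1
        exact sub_right_injective h1
      unfold Matrix.IsHermitian
      rw [conjTranspose_sub, conjTranspose_smul, hΞh, hLΞh]
      simp
    · have hρΞ : ρ • Ξ - L Ξ = (Ξ - L Ξ) - δ • Ξ := by
        rw [hρ]; module
      rw [star_trivial, hρΞ, sub_mulVec, dotProduct_sub, smul_mulVec, dotProduct_smul, smul_eq_mul]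
      have h1 := hc₀le x
      have h2 : 0 ≤ x ⬝ᵥ (Ξ - L Ξ) *ᵥ x := by simpa using hlyap.posSemidef.dotProduct_mulVec_nonneg x
      have h3 : δ * (x ⬝ᵥ Ξ *ᵥ x) ≤ δ * (c₀ * (x ⬝ᵥ (Ξ - L Ξ) *ᵥ x)) :=
        mul_le_mul_of_nonneg_left h1 hδpos.le
      have h4 : δ * c₀ ≤ 1 := by
        have : δ ≤ c₀⁻¹ := min_le_left _ _
        calc δ * c₀ ≤ c₀⁻¹ * c₀ := mul_le_mul_of_nonneg_right this hc₀.le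
        _ = 1 := inv_mul_cancel₀ hc₀.ne'
      nlinarith [h2, h3, h4]
  -- domination: X ⪯ c • Ξ
  obtain ⟨c, hc, hcle⟩ := stmt15_quad_compare X Ξ hX hΞ
  have hdom : (c • Ξ - X).PosSemidef := by
    refine .of_dotProduct_mulVec_nonneg ?_ (fun x => ?_)
    · unfold Matrix.IsHermitian
      rw [conjTranspose_sub, conjTranspose_smul, hΞ.1, hX.1]
      simp
    · rw [star_trivial, sub_mulVec, dotProduct_sub, smul_mulVec, dotProduct_smul,
        smul_eq_mul]
      simpa using sub_nonneg.mpr (hcle x)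
  -- main induction
  have main : ∀ k, (L^[k] X).PosSemidef ∧ ((c * ρ ^ k) • Ξ - L^[k] X).PosSemidef := by
    intro k
    induction k with
    | zero => simpa using ⟨hX, hdom⟩
    | succ k ih =>
      obtain ⟨ih1, ih2⟩ := ih
      constructor
      · rw [Function.iterate_succ_apply']
        exact hLpsd _ ih1
      · rw [Function.iterate_succ_apply']
        have hid : (c * ρ ^ (k + 1)) • Ξ - L (L^[k] X) =
            (c * ρ ^ k) • (ρ • Ξ - L Ξ) + (L ((c * ρ ^ k) • Ξ) - L (L^[k] X)) := by
          rw [hLsmul]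
          rw [pow_succ]
          module
        rw [hid]
        exact (stmt15_psd_smul hcontr (by positivity)).add (hLmono _ _ ih2)
  -- entrywise convergence
  have htend : ∀ i j : Fin n, Tendsto (fun k => L^[k] X i j) atTop (nhds 0) := by
    intro i j
    have hΞii : 0 ≤ Ξ i i := by
      have := hΞ.posSemidef.dotProduct_mulVec_nonneg (Pi.single i 1)
      rwa [star_trivial, stmt15_quad_basis] at this
    have hΞjj : 0 ≤ Ξ j j := by
      have := hΞ.posSemidef.dotProduct_mulVec_nonneg (Pi.single j 1)
      rwa [star_trivial, stmt15_quad_basis] at this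
    apply squeeze_zero_norm (a := fun k => ρ ^ k * (c * (Ξ i i + Ξ j j)))
    · intro k
      obtain ⟨hS, hBS⟩ := main k
      set S := L^[k] X with hSdef
      have hpk : (0:ℝ) ≤ ρ ^ k := pow_nonneg hρ0 k
      have hsym : S j i = S i j := by
        have h := hS.1
        have := congrFun (congrFun h i) j
        simpa [Matrix.conjTranspose_apply] using this
      have h1 : 0 ≤ S i i - S i j - S j i + S j j := by
        have := hS.dotProduct_mulVec_nonneg (Pi.single i 1 - Pi.single j 1)
        rwa [star_trivial, stmt15_quad_diff] at this
      have h1' : 0 ≤ S i i + S i j + S j i + S j j := by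
        have := hS.dotProduct_mulVec_nonneg (Pi.single i 1 + Pi.single j 1)
        rwa [star_trivial, stmt15_quad_sum] at this
      have h2 : 0 ≤ c * ρ ^ k * Ξ i i - S i i := by
        have := hBS.dotProduct_mulVec_nonneg (Pi.single i 1)
        rwa [star_trivial, stmt15_quad_basis, Matrix.sub_apply, Matrix.smul_apply, smul_eq_mul] at this
      have h3 : 0 ≤ c * ρ ^ k * Ξ j j - S j j := by
        have := hBS.dotProduct_mulVec_nonneg (Pi.single j 1)
        rwa [star_trivial, stmt15_quad_basis, Matrix.sub_apply, Matrix.smul_apply, smul_eq_mul] at this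
      rw [Real.norm_eq_abs, abs_le]
      constructor <;> nlinarith [mul_nonneg (mul_nonneg hc.le hpk) hΞii,
        mul_nonneg (mul_nonneg hc.le hpk) hΞjj]
    · have := (tendsto_pow_atTop_nhds_zero_of_lt_one hρ0 hρ1).mul_const (c * (Ξ i i + Ξ j j))
      simpa using this
  apply tendsto_pi_nhds.mpr
  intro i
  rw [tendsto_pi_nhds]
  intro j
  simpa using htend i j
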